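/- The rule f^≥ defined on the domain 𝒮 of separable preferences by: x ∈ f^≥(P_N) iff |{T ∈ t(P_N) : x ∈ T}| ≥ |t(P_N)|/2, where t(P_N) = {t(P_i) : i ∈ N} is the set of distinct top sets of the profile, satisfies ontoness, tops-onliness, false-name-proofness, participation, and object neutrality. -/

import Mathlib

/-! ## Basic framework: preferences, profiles, voting rules, axioms -/

/-- A preference is a strict linear order on the set `A` of alternatives, encoded as a
`LinearOrder` structure on `A`; alternative `x` is strictly preferred to `y` iff `y < x`
(i.e. "greater is better"). -/
abbrev Pref (A : Type*) := LinearOrder A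

/-- Strict preference: `x` is strictly preferred to `y` under `p`. -/
def Pref.pref {A : Type*} (p : Pref A) (x y : A) : Prop := p.lt y x

/-- Weak preference (the weak counterpart `R` of the strict preference `P`):
`x` is weakly preferred to `y` under `p`. -/
def Pref.wpref {A : Type*} (p : Pref A) (x y : A) : Prop := p.le y x

/-- The top (most preferred) alternative of a preference. -/
noncomputable def Pref.top {A : Type*} [Fintype A] [Nonempty A] (p : Pref A) : A :=
  @Finset.max' A p Finset.univ Finset.univ_nonempty

/-- The bottom (least preferred) alternative of a preference. -/
noncomputable def Pref.bot {A : Type*} [Fintype A] [Nonempty A] (p : Pref A) : A :=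
  @Finset.min' A p Finset.univ Finset.univ_nonempty

/-- A profile over the society `N` (a finite set of voters, indexed by naturals):
it assigns a preference to each member of `N`. -/
abbrev Profile (A : Type*) (N : Finset ℕ) := (i : ℕ) → i ∈ N → Pref A

/-- The profile `P` takes values in the domain `D` of preferences. -/
def Profile.inDomain {A : Type*} {N : Finset ℕ} (P : Profile A N) (D : Set (Pref A)) : Prop :=
  ∀ i (hi : i ∈ N), P i hi ∈ D

/-- A (variable-population) voting rule: it assigns an alternative to every society
together with a profile over it. -/
abbrev Rule (A : Type*) := (N : Finset ℕ) → Profile A N → A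

/-- Ontoness on the domain `D`: for every society and every alternative, some
`D`-profile realizes that alternative. -/
def OntoOn {A : Type*} (D : Set (Pref A)) (f : Rule A) : Prop :=
  ∀ N : Finset ℕ, N.Nonempty → ∀ a : A, ∃ P : Profile A N, P.inDomain D ∧ f N P = a

/-- Tops-onliness on the domain `D`: two `D`-profiles with the same tops get the
same outcome. -/
def TopsOnlyOn {A : Type*} [Fintype A] [Nonempty A] (D : Set (Pref A)) (f : Rule A) : Prop :=
  ∀ N : Finset ℕ, N.Nonempty → ∀ P P' : Profile A N, P.inDomain D → P'.inDomain D →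
    (∀ i (hi : i ∈ N), (P i hi).top = (P' i hi).top) → f N P = f N P'

/-- False-name-proofness on the domain `D`: if a voter `i` of the society `N` casts,
under fresh identities `N'`, extra votes identical to her own preference, the outcome
does not improve for her. -/
def FalseNameProofOn {A : Type*} (D : Set (Pref A)) (f : Rule A) : Prop :=
  ∀ N N' : Finset ℕ, N.Nonempty → N'.Nonempty → Disjoint N N' →
    ∀ P : Profile A (N ∪ N'), P.inDomain D →
      ∀ i (hi : i ∈ N),
        (∀ j (hj : j ∈ N'),
            P j (Finset.mem_union_right N hj) = P i (Finset.mem_union_left N' hi)) →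
        (P i (Finset.mem_union_left N' hi)).wpref
          (f N (fun j hj => P j (Finset.mem_union_left N' hj)))
          (f (N ∪ N') P)

/-- Participation on the domain `D`: no voter gains by abstaining. -/
def ParticipationOn {A : Type*} (D : Set (Pref A)) (f : Rule A) : Prop :=
  ∀ N : Finset ℕ, 2 ≤ N.card → ∀ P : Profile A N, P.inDomain D →
    ∀ i (hi : i ∈ N),
      (P i hi).wpref (f N P) (f (N.erase i) (fun j hj => P j (Finset.mem_of_mem_erase hj)))

lemma mem_of_mem_image_perm {σ : Equiv.Perm ℕ} {N : Finset ℕ} {j : ℕ}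
    (hj : j ∈ N.image σ) : σ.symm j ∈ N := by
  obtain ⟨i, hi, rfl⟩ := Finset.mem_image.mp hj
  simpa using hi

/-- The permuted profile `σ(P_N)` over the society `σ(N)`: voter `σ i` gets the
preference `P i`. -/
def permProfile {A : Type*} (σ : Equiv.Perm ℕ) {N : Finset ℕ} (P : Profile A N) :
    Profile A (N.image σ) :=
  fun j hj => P (σ.symm j) (mem_of_mem_image_perm hj)

/-- Anonymity on the domain `D`: permuting the voters' identities does not change
the outcome. -/
def AnonymousOn {A : Type*} (D : Set (Pref A)) (f : Rule A) : Prop :=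
  ∀ (σ : Equiv.Perm ℕ) (N : Finset ℕ), N.Nonempty → ∀ P : Profile A N, P.inDomain D →
    f (N.image σ) (permProfile σ P) = f N P

/-- Relabeling a preference along a permutation `γ` of the alternatives: in the new
preference, `γ x` is strictly preferred to `γ y` iff `x` was strictly preferred to `y`. -/
noncomputable def Pref.relabel {A : Type*} (p : Pref A) (γ : Equiv.Perm A) : Pref A :=
  @LinearOrder.lift' A A p γ.symm γ.symm.injective

/-- Neutrality on the domain `D`: relabeling the alternatives by a permutation `γ`
relabels the outcome accordingly. -/
def NeutralOn {A : Type*} (D : Set (Pref A)) (f : Rule A) : Prop :=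
  ∀ (γ : Equiv.Perm A) (N : Finset ℕ), N.Nonempty → ∀ P : Profile A N, P.inDomain D →
    γ (f N P) = f N (fun i hi => (P i hi).relabel γ)

/-! ## The domain of preferences over subsets of a set `O` of objects -/

/-- Object neutrality: permuting the objects by `μ` (which permutes every subset of
objects pointwise) relabels the outcome accordingly. -/
def ObjectNeutralOn {O : Type*} [Fintype O] [DecidableEq O]
    (D : Set (Pref (Finset O))) (f : Rule (Finset O)) : Prop :=
  ∀ (μ : Equiv.Perm O) (N : Finset ℕ), N.Nonempty →
    ∀ P : Profile (Finset O) N, P.inDomain D →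
      (f N P).image μ = f N (fun i hi => (P i hi).relabel μ.finsetCongr)

/-- A preference over subsets of objects is separable if adding an object `x ∉ S` to a
set `S` improves the set exactly when `{x}` is preferred to `∅`. -/
def Separable {O : Type*} [Fintype O] [DecidableEq O] (p : Pref (Finset O)) : Prop :=
  ∀ (S : Finset O) (x : O), x ∉ S → (p.pref (insert x S) S ↔ p.pref {x} (∅ : Finset O))

/-- The domain of separable preferences over subsets of objects. -/
def SepDom (O : Type*) [Fintype O] [DecidableEq O] : Set (Pref (Finset O)) :=
  {p | Separable p}

/-- `t(P_N)`: the set of distinct top sets of the profile `P`. -/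
noncomputable def distinctTops {O : Type*} [Fintype O] [DecidableEq O] {N : Finset ℕ}
    (P : Profile (Finset O) N) : Finset (Finset O) :=
  N.attach.image fun i => (P i.1 i.2).top

/-- The rule `f^>`: an object is chosen iff it belongs to strictly more than half of the
distinct top sets of the profile. -/
noncomputable def fGt (O : Type*) [Fintype O] [DecidableEq O] : Rule (Finset O) :=
  fun N P =>
    Finset.univ.filter fun x =>
      (distinctTops P).card < 2 * ((distinctTops P).filter fun T => x ∈ T).card

/-- The rule `f^≥`: an object is chosen iff it belongs to at least half of the
distinct top sets of the profile. -/
noncomputable def fGe (O : Type*) [Fintype O] [DecidableEq O] : Rule (Finset O) :=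
  fun N P =>
    Finset.univ.filter fun x =>
      (distinctTops P).card ≤ 2 * ((distinctTops P).filter fun T => x ∈ T).card

/-- `g` is the tops-only extension to the domain `Dbig` (⊇ separable preferences) of the
tops-only rule `f` defined on the separable domain: on every `Dbig`-profile `P`, `g`
agrees with the value of `f` at any separable profile `Q` having the same tops as `P`. -/
def IsTopsOnlyExtensionOn {O : Type*} [Fintype O] [DecidableEq O]
    (Dbig : Set (Pref (Finset O))) (f g : Rule (Finset O)) : Prop :=
  ∀ N : Finset ℕ, N.Nonempty →
    ∀ P : Profile (Finset O) N, P.inDomain Dbig →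
      ∀ Q : Profile (Finset O) N, Q.inDomain (SepDom O) →
        (∀ i (hi : i ∈ N), (P i hi).top = (Q i hi).top) → g N P = f N Q


section Aux

/-! ### Generic facts about `Pref.top` -/

lemma Pref.le_top' {A : Type*} [Fintype A] [Nonempty A] (p : Pref A) (b : A) :
    p.le b p.top :=
  @Finset.le_max' A p _ b (Finset.mem_univ b)

lemma Pref.top_eq' {A : Type*} [Fintype A] [Nonempty A] (p : Pref A) (a : A)
    (h : ∀ b, p.le b a) : p.top = a :=
  @le_antisymm A p.toPartialOrder _ _ (h p.top) (p.le_top' a)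

lemma Pref.relabel_le {A : Type*} (p : Pref A) (γ : Equiv.Perm A) (x y : A) :
    (p.relabel γ).le x y ↔ p.le (γ.symm x) (γ.symm y) := Iff.rfl

lemma Pref.relabel_top {A : Type*} [Fintype A] [Nonempty A] (p : Pref A) (γ : Equiv.Perm A) :
    (p.relabel γ).top = γ p.top := by
  apply Pref.top_eq'
  intro b
  show p.le (γ.symm b) (γ.symm (γ p.top))
  rw [Equiv.symm_apply_apply]
  exact p.le_top' _

variable {O : Type*} [Fintype O] [DecidableEq O]

/-! ### Separable preferences -/

lemma mem_top_iff {p : Pref (Finset O)} (hp : Separable p) (x : O) :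
    x ∈ p.top ↔ p.pref {x} ∅ := by
  constructor
  · intro hx
    have h1 : insert x (p.top.erase x) = p.top := Finset.insert_erase hx
    have h2 := hp (p.top.erase x) x (Finset.notMem_erase x _)
    rw [h1] at h2
    apply h2.1
    have hle := p.le_top' (p.top.erase x)
    have hne : p.top.erase x ≠ p.top := by
      intro h; exact (Finset.erase_eq_self.mp h) hx
    exact @lt_of_le_of_ne _ p.toPartialOrder _ _ hle hne
  · intro hx
    by_contra hxt
    have h2 := (hp p.top x hxt).2 hx
    have hle := p.le_top' (insert x p.top)
    exact @lt_irrefl _ p.toPreorder p.top (@lt_of_lt_of_le _ p.toPreorder _ _ _ h2 hle)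

/-- The key improvement lemma for separable preferences. -/
lemma sep_improve {p : Pref (Finset O)} (hp : Separable p) :
    ∀ (n : ℕ) (a b : Finset O), ((a \ b) ∪ (b \ a)).card ≤ n →
      (∀ x ∈ p.top, x ∈ b → x ∈ a) → (∀ x, x ∉ p.top → x ∈ a → x ∈ b) →
      p.le b a := by
  intro n
  induction n with
  | zero =>
    intro a b hcard h1 h2
    have hd : (a \ b) ∪ (b \ a) = ∅ := Finset.card_eq_zero.1 (Nat.le_zero.1 hcard)
    have hab : a = b := by
      ext x
      constructor
      · intro hx
        by_contra hxb
        have : x ∈ (a \ b) ∪ (b \ a) := Finset.mem_union_left _ (Finset.mem_sdiff.2 ⟨hx, hxb⟩)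
        simp [hd] at this
      · intro hx
        by_contra hxa
        have : x ∈ (a \ b) ∪ (b \ a) := Finset.mem_union_right _ (Finset.mem_sdiff.2 ⟨hx, hxa⟩)
        simp [hd] at this
    exact hab ▸ @le_refl _ p.toPreorder a
  | succ n ih =>
    intro a b hcard h1 h2
    by_cases hab : (a \ b) ∪ (b \ a) = ∅
    · have hab' : a = b := by
        ext x
        constructor
        · intro hx; by_contra hxb
          have : x ∈ (a \ b) ∪ (b \ a) :=
            Finset.mem_union_left _ (Finset.mem_sdiff.2 ⟨hx, hxb⟩)
          simp [hab] at this
        · intro hx; by_contra hxa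
          have : x ∈ (a \ b) ∪ (b \ a) :=
            Finset.mem_union_right _ (Finset.mem_sdiff.2 ⟨hx, hxa⟩)
          simp [hab] at this
      exact hab' ▸ @le_refl _ p.toPreorder a
    · obtain ⟨x, hx⟩ := Finset.nonempty_iff_ne_empty.2 hab
      rcases Finset.mem_union.1 hx with hx' | hx'
      · -- x ∈ a \ b : add x (a good object) to b
        obtain ⟨hxa, hxb⟩ := Finset.mem_sdiff.1 hx'
        have hxt : x ∈ p.top := by
          by_contra hxt
          exact hxb (h2 x hxt hxa)
        have hstep : p.lt b (insert x b) :=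
          (hp b x hxb).2 ((mem_top_iff hp x).1 hxt)
        have hcard' : ((a \ insert x b) ∪ (insert x b \ a)).card ≤ n := by
          have he : (a \ insert x b) ∪ (insert x b \ a) = ((a \ b) ∪ (b \ a)).erase x := by
            ext y
            by_cases hyx : y = x
            · subst hyx
              simp [hxa, hxb]
            · simp only [Finset.mem_union, Finset.mem_sdiff, Finset.mem_insert,
                Finset.mem_erase, hyx, false_or, ne_eq, not_false_eq_true, true_and] <;> tauto
          rw [he]
          have hxm : x ∈ (a \ b) ∪ (b \ a) := hx
          have := Finset.card_erase_of_mem hxm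
          omega
        have h1' : ∀ y ∈ p.top, y ∈ insert x b → y ∈ a := by
          intro y hyt hyb
          rcases Finset.mem_insert.1 hyb with rfl | hyb
          · exact hxa
          · exact h1 y hyt hyb
        have h2' : ∀ y, y ∉ p.top → y ∈ a → y ∈ insert x b := by
          intro y hyt hya
          exact Finset.mem_insert_of_mem (h2 y hyt hya)
        exact @le_trans _ p.toPreorder _ _ _ (@le_of_lt _ p.toPreorder _ _ hstep)
          (ih a (insert x b) hcard' h1' h2')
      · -- x ∈ b \ a : remove x (a bad object) from b
        obtain ⟨hxb, hxa⟩ := Finset.mem_sdiff.1 hx'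
        have hxt : x ∉ p.top := by
          intro hxt
          exact hxa (h1 x hxt hxb)
        have hstep : p.le b (b.erase x) := by
          have hsep := hp (b.erase x) x (Finset.notMem_erase x b)
          rw [Finset.insert_erase hxb] at hsep
          have hnot : ¬ p.lt (b.erase x) b := by
            intro hlt
            exact hxt ((mem_top_iff hp x).2 (hsep.1 hlt))
          exact (@not_lt _ p _ _).1 hnot
        have hcard' : ((a \ b.erase x) ∪ (b.erase x \ a)).card ≤ n := by
          have he : (a \ b.erase x) ∪ (b.erase x \ a) = ((a \ b) ∪ (b \ a)).erase x := by
            ext y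
            by_cases hyx : y = x
            · subst hyx
              simp [hxa, hxb]
            · simp only [Finset.mem_union, Finset.mem_sdiff, Finset.mem_erase, hyx,
                ne_eq, not_false_eq_true, true_and, false_and, not_and] <;> tauto
          rw [he]
          have := Finset.card_erase_of_mem (show x ∈ (a \ b) ∪ (b \ a) from hx)
          omega
        have h1' : ∀ y ∈ p.top, y ∈ b.erase x → y ∈ a := fun y hyt hyb =>
          h1 y hyt (Finset.mem_of_mem_erase hyb)
        have h2' : ∀ y, y ∉ p.top → y ∈ a → y ∈ b.erase x := by
          intro y hyt hya
          refine Finset.mem_erase.2 ⟨?_, h2 y hyt hya⟩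
          rintro rfl; exact hxa hya
        exact @le_trans _ p.toPreorder _ _ _ hstep (ih a (b.erase x) hcard' h1' h2')

end Aux

section Aux2

variable {O : Type*} [Fintype O] [DecidableEq O]

lemma mem_distinctTops {N : Finset ℕ} {P : Profile (Finset O) N} {T : Finset O} :
    T ∈ distinctTops P ↔ ∃ i, ∃ hi : i ∈ N, (P i hi).top = T := by
  constructor
  · intro h
    obtain ⟨⟨i, hi⟩, -, rfl⟩ := Finset.mem_image.1 h
    exact ⟨i, hi, rfl⟩
  · rintro ⟨i, hi, rfl⟩
    exact Finset.mem_image.2 ⟨⟨i, hi⟩, Finset.mem_attach _ _, rfl⟩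

/-- `fGe` only depends on the distinct tops. -/
lemma fGe_congr {N N' : Finset ℕ} {P : Profile (Finset O) N} {P' : Profile (Finset O) N'}
    (h : distinctTops P = distinctTops P') : fGe O N P = fGe O N' P' := by
  simp only [fGe, h]

/-! ### Construction of a separable preference with a given top -/

noncomputable def embO (O : Type*) [Fintype O] : O ↪ ℕ :=
  (Fintype.equivFin O).toEmbedding.trans Fin.valEmbedding

def goodSet (a T : Finset O) : Finset O := (T ∩ a) ∪ ((Finset.univ \ a) \ T)

lemma mem_goodSet {a T : Finset O} {x : O} :
    x ∈ goodSet a T ↔ ((x ∈ a ∧ x ∈ T) ∨ (x ∉ a ∧ x ∉ T)) := by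
  simp [goodSet]; tauto

lemma goodSet_injective (a : Finset O) : Function.Injective (goodSet a) := by
  intro T T' h
  ext x
  have h2 : ((x ∈ a ∧ x ∈ T) ∨ (x ∉ a ∧ x ∉ T)) ↔ ((x ∈ a ∧ x ∈ T') ∨ (x ∉ a ∧ x ∉ T')) := by
    rw [← mem_goodSet, ← mem_goodSet, h]
  by_cases hxa : x ∈ a <;> tauto

lemma sum_two_pow_sort (s : Finset ℕ) :
    ∑ x ∈ s, (2:ℕ) ^ x = ((s.sort (·≤·)).map (2 ^ ·)).sum := by
  have h : ((s.sort (·≤·) : List ℕ) : Multiset ℕ) = s.1 := Finset.sort_eq s _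
  rw [Finset.sum, ← h, Multiset.map_coe, Multiset.sum_coe]

lemma sum_two_pow_injective :
    Function.Injective (fun s : Finset ℕ => ∑ k ∈ s, (2:ℕ) ^ k) := by
  intro s t h
  simp only [sum_two_pow_sort] at h
  have hs := Nat.bitIndices_twoPowsum (Finset.sortedLT_sort s)
  have ht := Nat.bitIndices_twoPowsum (Finset.sortedLT_sort t)
  rw [h] at hs
  have : s.sort (·≤·) = t.sort (·≤·) := hs.symm.trans ht
  have := congrArg List.toFinset this
  rwa [Finset.sort_toFinset, Finset.sort_toFinset] at this

noncomputable def Phi (a T : Finset O) : ℕ := ∑ x ∈ goodSet a T, 2 ^ (embO O x)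

lemma Phi_injective (a : Finset O) : Function.Injective (Phi a) := by
  intro T T' h
  apply goodSet_injective a
  apply Finset.image_injective (embO O).injective
  apply sum_two_pow_injective
  simpa only [Phi, Finset.sum_image (fun x _ y _ h => (embO O).injective h)] using h

/-- The separable preference with top `a`. -/
noncomputable def sepPref (a : Finset O) : Pref (Finset O) :=
  LinearOrder.lift' (Phi a) (Phi_injective a)

lemma sepPref_lt {a T S : Finset O} : (sepPref a).lt S T ↔ Phi a S < Phi a T := Iff.rfl

lemma sepPref_le {a T S : Finset O} : (sepPref a).le S T ↔ Phi a S ≤ Phi a T := Iff.rfl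

lemma goodSet_insert_mem {a S : Finset O} {x : O} (hx : x ∉ S) (hxa : x ∈ a) :
    goodSet a (insert x S) = insert x (goodSet a S) := by
  ext y
  by_cases hyx : y = x
  · subst hyx; simp [mem_goodSet, hxa]
  · simp [mem_goodSet, hyx] <;> tauto

lemma goodSet_insert_not_mem {a S : Finset O} {x : O} (hx : x ∉ S) (hxa : x ∉ a) :
    goodSet a (insert x S) = (goodSet a S).erase x := by
  ext y
  by_cases hyx : y = x
  · subst hyx; simp [mem_goodSet, hxa, hx]
  · simp [mem_goodSet, hyx] <;> tauto

lemma sepPref_insert_iff {a S : Finset O} {x : O} (hx : x ∉ S) :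
    (sepPref a).pref (insert x S) S ↔ x ∈ a := by
  have hxg : x ∈ goodSet a S ↔ x ∉ a := by
    simp [mem_goodSet, hx]
  constructor
  · intro h
    by_contra hxa
    have h1 : goodSet a (insert x S) = (goodSet a S).erase x :=
      goodSet_insert_not_mem hx hxa
    have hlt : Phi a S < Phi a (insert x S) := h
    have : Phi a (insert x S) ≤ Phi a S := by
      unfold Phi
      rw [h1]
      exact Finset.sum_le_sum_of_subset (Finset.erase_subset x _)
    omega
  · intro hxa
    have h1 : goodSet a (insert x S) = insert x (goodSet a S) :=
      goodSet_insert_mem hx hxa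
    show Phi a S < Phi a (insert x S)
    unfold Phi
    rw [h1, Finset.sum_insert (by simp [hxg, hxa])]
    have : 0 < 2 ^ (embO O x) := Nat.pow_pos (by norm_num)
    omega

lemma sepPref_separable (a : Finset O) : Separable (sepPref a) := by
  intro S x hx
  rw [sepPref_insert_iff hx]
  have : ({x} : Finset O) = insert x ∅ := rfl
  rw [this, sepPref_insert_iff (Finset.notMem_empty x)]

lemma sepPref_top (a : Finset O) : (sepPref a).top = a := by
  apply Pref.top_eq'
  intro T
  rw [sepPref_le]
  unfold Phi
  apply Finset.sum_le_sum_of_subset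
  have : goodSet a a = Finset.univ := by
    ext x; by_cases hxa : x ∈ a <;> simp [mem_goodSet, hxa]
  rw [this]
  exact Finset.subset_univ _

end Aux2

/-- On the domain of separable preferences, the rule `f^≥` (an object is
chosen iff it belongs to at least half of the distinct top sets of the profile) satisfies
ontoness, tops-onliness, false-name-proofness, participation and object neutrality. -/
theorem stmt_7 {O : Type*} [Fintype O] [DecidableEq O] (hO : 2 ≤ Fintype.card O) :
    OntoOn (SepDom O) (fGe O) ∧ TopsOnlyOn (SepDom O) (fGe O) ∧
    FalseNameProofOn (SepDom O) (fGe O) ∧ ParticipationOn (SepDom O) (fGe O) ∧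
    ObjectNeutralOn (SepDom O) (fGe O) := by
  refine ⟨?_, ?_, ?_, ?_, ?_⟩
  · -- Ontoness
    intro N hN a
    refine ⟨fun _ _ => sepPref a, fun i hi => sepPref_separable a, ?_⟩
    have hD : distinctTops (fun (i : ℕ) (_ : i ∈ N) => sepPref a) = {a} := by
      ext T
      rw [mem_distinctTops, Finset.mem_singleton]
      constructor
      · rintro ⟨i, hi, rfl⟩; exact sepPref_top a
      · rintro rfl
        obtain ⟨i, hi⟩ := hN
        exact ⟨i, hi, sepPref_top _⟩
    simp only [fGe, hD]
    ext x
    simp only [Finset.mem_filter, Finset.mem_univ, true_and, Finset.card_singleton,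
      Finset.filter_singleton]
    by_cases hxa : x ∈ a
    · simp [hxa]
    · simp [hxa]
  · -- Tops-onliness
    intro N hN P P' _ _ h
    apply fGe_congr
    unfold distinctTops
    apply Finset.image_congr
    rintro ⟨i, hi⟩ -
    exact h i hi
  · -- False-name-proofness
    intro N N' hN hN' hdisj P hPdom i hi hdup
    have hD : distinctTops P
        = distinctTops (fun j hj => P j (Finset.mem_union_left N' hj)) := by
      ext T
      rw [mem_distinctTops, mem_distinctTops]
      constructor
      · rintro ⟨j, hj, rfl⟩
        rcases Finset.mem_union.1 hj with hjN | hjN'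
        · exact ⟨j, hjN, rfl⟩
        · exact ⟨i, hi, (congrArg Pref.top (hdup j hjN')).symm⟩
      · rintro ⟨j, hj, rfl⟩
        exact ⟨j, Finset.mem_union_left N' hj, rfl⟩
    rw [Pref.wpref, fGe_congr hD]
    exact @le_refl _ (P i (Finset.mem_union_left N' hi)).toPreorder _
  · -- Participation
    intro N hcard P hPdom i hi
    have hsep : Separable (P i hi) := hPdom i hi
    have hDins : distinctTops P
        = insert ((P i hi).top)
            (distinctTops ((fun j hj => P j (Finset.mem_of_mem_erase hj) : Profile (Finset O) (N.erase i)))) := by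
      ext T
      rw [mem_distinctTops, Finset.mem_insert, mem_distinctTops]
      constructor
      · rintro ⟨j, hj, rfl⟩
        by_cases hji : j = i
        · subst hji; left; rfl
        · right; exact ⟨j, Finset.mem_erase.2 ⟨hji, hj⟩, rfl⟩
      · rintro (rfl | ⟨j, hj, rfl⟩)
        · exact ⟨i, hi, rfl⟩
        · exact ⟨j, Finset.mem_of_mem_erase hj, rfl⟩
    by_cases hmem : (P i hi).top
        ∈ distinctTops ((fun j hj => P j (Finset.mem_of_mem_erase hj) : Profile (Finset O) (N.erase i)))
    · have hD : distinctTops P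
          = distinctTops ((fun j hj => P j (Finset.mem_of_mem_erase hj) : Profile (Finset O) (N.erase i))) := by
        rw [hDins, Finset.insert_eq_self.2 hmem]
      rw [Pref.wpref, fGe_congr hD]
      exact @le_refl _ (P i hi).toPreorder _
    · rw [Pref.wpref]
      refine sep_improve hsep (Fintype.card O) _ _ (Finset.card_le_univ _) ?_ ?_
      · intro x hxt hxb
        simp only [fGe, Finset.mem_filter, Finset.mem_univ, true_and] at hxb ⊢
        rw [hDins, Finset.card_insert_of_notMem hmem, Finset.filter_insert, if_pos hxt,
          Finset.card_insert_of_notMem (fun h => hmem (Finset.mem_of_mem_filter _ h))]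
        omega
      · intro x hxt hxa
        simp only [fGe, Finset.mem_filter, Finset.mem_univ, true_and] at hxa ⊢
        rw [hDins, Finset.card_insert_of_notMem hmem, Finset.filter_insert,
          if_neg hxt] at hxa
        omega
  · -- Object neutrality
    intro μ N hN P hPdom
    have hD : distinctTops (fun i hi => (P i hi).relabel μ.finsetCongr)
        = (distinctTops P).image (fun T => T.image μ) := by
      unfold distinctTops
      rw [Finset.image_image]
      apply Finset.image_congr
      rintro ⟨i, hi⟩ -
      show ((P i hi).relabel μ.finsetCongr).top = (P i hi).top.image μ
      rw [Pref.relabel_top]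
      simp [Equiv.finsetCongr_apply, Finset.map_eq_image]
    have hinj : Function.Injective (fun T : Finset O => T.image μ) :=
      Finset.image_injective μ.injective
    have hcard : ((distinctTops P).image (fun T => T.image μ)).card
        = (distinctTops P).card :=
      Finset.card_image_of_injective _ hinj
    have hfil : ∀ y : O,
        (((distinctTops P).image (fun T => T.image μ)).filter (fun T => y ∈ T)).card
          = ((distinctTops P).filter (fun T => μ.symm y ∈ T)).card := by
      intro y
      rw [Finset.filter_image, Finset.card_image_of_injective _ hinj]
      congr 1
      apply Finset.filter_congr
      intro T _
      simp only [Finset.mem_image]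
      constructor
      · rintro ⟨x, hx, rfl⟩; simpa using hx
      · intro h; exact ⟨μ.symm y, h, μ.apply_symm_apply y⟩
    simp only [fGe, hD]
    ext y
    simp only [Finset.mem_image, Finset.mem_filter, Finset.mem_univ, true_and, hcard, hfil]
    constructor
    · rintro ⟨x, hx, rfl⟩
      simpa using hx
    · intro h
      exact ⟨μ.symm y, h, μ.apply_symm_apply y⟩
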